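/- Let α, β > 0, set x = √2·α/β, and let φ₂ = ((x/4)·(x + √(x² + 8)))^(1/4). Then V''(φ₂) = (β²/8)·√(x² + 8)·(3x − √(x² + 8)); in particular V''(φ₂) > 0 if and only if x > 1. -/

import Mathlib

/-- The potential `V` of the reduced Lichnerowicz ODE in the conformal gauge
`R̊ = α² + β²`. -/
noncomputable def V (α β φ : ℝ) : ℝ :=
  -((α ^ 2 + β ^ 2) / 16) * φ ^ 2 + (β ^ 2 / 48) * φ ^ 6 - (α ^ 2 / 48) / φ ^ 6

lemma deriv_V (α β : ℝ) {φ : ℝ} (hφ : φ ≠ 0) :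
    deriv (V α β) φ = -((α ^ 2 + β ^ 2) / 8) * φ + (β ^ 2 / 8) * φ ^ 5
      + (α ^ 2 / 8) / φ ^ 7 := by
  have h1 : HasDerivAt (fun φ : ℝ => -((α ^ 2 + β ^ 2) / 16) * φ ^ 2)
      (-((α ^ 2 + β ^ 2) / 16) * (2 * φ ^ 1)) φ := (hasDerivAt_pow 2 φ).const_mul _
  have h2 : HasDerivAt (fun φ : ℝ => (β ^ 2 / 48) * φ ^ 6)
      ((β ^ 2 / 48) * (6 * φ ^ 5)) φ := (hasDerivAt_pow 6 φ).const_mul _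
  have h3 : HasDerivAt (fun φ : ℝ => (α ^ 2 / 48) / φ ^ 6)
      ((0 * φ ^ 6 - (α ^ 2 / 48) * (6 * φ ^ 5)) / (φ ^ 6) ^ 2) φ :=
    (hasDerivAt_const φ (α ^ 2 / 48)).div (hasDerivAt_pow 6 φ) (pow_ne_zero 6 hφ)
  have h : HasDerivAt (V α β)
      (-((α ^ 2 + β ^ 2) / 16) * (2 * φ ^ 1) + (β ^ 2 / 48) * (6 * φ ^ 5)
        - (0 * φ ^ 6 - (α ^ 2 / 48) * (6 * φ ^ 5)) / (φ ^ 6) ^ 2) φ :=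
    (h1.add h2).sub h3
  rw [h.deriv]
  field_simp
  ring

/-- `V''(φ₂) = (β²/8)·√(x²+8)·(3x − √(x²+8))`, which is positive
exactly when `x > 1`. -/
theorem stmt_8 (α β : ℝ) (hα : 0 < α) (hβ : 0 < β) (x φ₂ : ℝ)
    (hx : x = Real.sqrt 2 * α / β)
    (hφ₂ : φ₂ = ((x / 4) * (x + Real.sqrt (x ^ 2 + 8))) ^ ((1 : ℝ) / 4)) :
    deriv (deriv (V α β)) φ₂
      = (β ^ 2 / 8) * Real.sqrt (x ^ 2 + 8) * (3 * x - Real.sqrt (x ^ 2 + 8)) ∧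
    (0 < deriv (deriv (V α β)) φ₂ ↔ 1 < x) := by
  set s : ℝ := Real.sqrt (x ^ 2 + 8) with hs
  have hx0 : 0 < x := by
    rw [hx]
    positivity
  have hs2 : s ^ 2 = x ^ 2 + 8 := Real.sq_sqrt (by positivity)
  have hs0 : 0 < s := Real.sqrt_pos.mpr (by positivity)
  set t : ℝ := (x / 4) * (x + s) with ht
  have ht0 : 0 < t := by positivity
  have hφ₂0 : 0 < φ₂ := by
    rw [hφ₂]; exact Real.rpow_pos_of_pos ht0 _
  have hφ₂4 : φ₂ ^ 4 = t := by
    rw [hφ₂, ← Real.rpow_natCast (_ ^ ((1:ℝ)/4)) 4, ← Real.rpow_mul ht0.le]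
    norm_num
  have hα2 : α ^ 2 = x ^ 2 * β ^ 2 / 2 := by
    have : x * β = Real.sqrt 2 * α := by
      rw [hx]; field_simp
    have h2 : (x * β) ^ 2 = (Real.sqrt 2 * α) ^ 2 := by rw [this]
    have hsq2 : Real.sqrt 2 ^ 2 = 2 := Real.sq_sqrt (by norm_num)
    nlinarith [hsq2]
  -- compute second derivative
  have hev : deriv (V α β) =ᶠ[nhds φ₂]
      fun φ => -((α ^ 2 + β ^ 2) / 8) * φ + (β ^ 2 / 8) * φ ^ 5
        + (α ^ 2 / 8) / φ ^ 7 := by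
    filter_upwards [eventually_ne_nhds hφ₂0.ne'] with φ hφ
    exact deriv_V α β hφ
  have hg : deriv (fun φ : ℝ => -((α ^ 2 + β ^ 2) / 8) * φ + (β ^ 2 / 8) * φ ^ 5
        + (α ^ 2 / 8) / φ ^ 7) φ₂
      = -((α ^ 2 + β ^ 2) / 8) + (5 * β ^ 2 / 8) * φ₂ ^ 4
        - (7 * α ^ 2 / 8) / φ₂ ^ 8 := by
    have h1 : HasDerivAt (fun φ : ℝ => -((α ^ 2 + β ^ 2) / 8) * φ)
        (-((α ^ 2 + β ^ 2) / 8) * 1) φ₂ := (hasDerivAt_id φ₂).const_mul _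
    have h2 : HasDerivAt (fun φ : ℝ => (β ^ 2 / 8) * φ ^ 5)
        ((β ^ 2 / 8) * (5 * φ₂ ^ 4)) φ₂ := (hasDerivAt_pow 5 φ₂).const_mul _
    have h3 : HasDerivAt (fun φ : ℝ => (α ^ 2 / 8) / φ ^ 7)
        ((0 * φ₂ ^ 7 - (α ^ 2 / 8) * (7 * φ₂ ^ 6)) / (φ₂ ^ 7) ^ 2) φ₂ :=
      (hasDerivAt_const φ₂ (α ^ 2 / 8)).div (hasDerivAt_pow 7 φ₂)
        (pow_ne_zero 7 hφ₂0.ne')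
    have hd : HasDerivAt (fun φ : ℝ => -((α ^ 2 + β ^ 2) / 8) * φ + (β ^ 2 / 8) * φ ^ 5
        + (α ^ 2 / 8) / φ ^ 7) _ φ₂ := (h1.add h2).add h3
    rw [hd.deriv]
    have : φ₂ ≠ 0 := hφ₂0.ne'
    field_simp
    ring
  have hderiv2 : deriv (deriv (V α β)) φ₂
      = -((α ^ 2 + β ^ 2) / 8) + (5 * β ^ 2 / 8) * φ₂ ^ 4
        - (7 * α ^ 2 / 8) / φ₂ ^ 8 := by
    rw [hev.deriv_eq, hg]
  have hφ₂8 : φ₂ ^ 8 = t ^ 2 := by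
    rw [show (8 : ℕ) = 4 * 2 by norm_num, pow_mul, hφ₂4]
  have htne : t ≠ 0 := ht0.ne'
  have h4t : 4 * t = x ^ 2 + x * s := by rw [ht]; ring
  have h2t : 2 * t ^ 2 = x ^ 2 * (t + 1) := by
    rw [ht]; linear_combination (x ^ 2 / 8) * hs2
  have hRHS : s * (3 * x - s) = 12 * t - 4 * x ^ 2 - 8 := by
    linear_combination (-3 : ℝ) * h4t - hs2
  have key : deriv (deriv (V α β)) φ₂
      = (β ^ 2 / 8) * s * (3 * x - s) := by
    rw [hderiv2, hφ₂4, hφ₂8, hα2, mul_assoc, hRHS]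
    field_simp
    linear_combination (-7 * (t - 1)) * h2t
  refine ⟨key, ?_⟩
  rw [key]
  have hc : (0 : ℝ) < β ^ 2 / 8 * s := by positivity
  rw [mul_pos_iff_of_pos_left hc, sub_pos]
  constructor
  · intro h3
    have : x ^ 2 + 8 < (3 * x) ^ 2 :=
      (Real.sqrt_lt' (by positivity : (0:ℝ) < 3 * x)).mp h3
    nlinarith
  · intro h
    exact (Real.sqrt_lt' (by positivity : (0:ℝ) < 3 * x)).mpr (by nlinarith)
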